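/- The map sending a composition (p_1,…,p_k) to the word x_{p_1}x_{p_2}⋯x_{p_k} is an order isomorphism from the poset 𝔑 of compositions onto the poset of words over the alphabet {x_1, x_2, x_3, …} in which m_1 ≤ m_2 if and only if m_2 can be obtained from m_1 by a finite sequence of operations of the following forms: multiplying by a word on the left, multiplying by a word on the right, or replacing an occurrence of a letter x_i by a letter x_j with j > i. -/

import Mathlib

/-- Compositions are encoded as lists of positive integers (their parts).
`NCoversP P Q` : `Q` covers `P` in the poset 𝔑. -/
def NCoversP (P Q : List ℕ+) : Prop :=
  Q = 1 :: P ∨ Q = P ++ [1] ∨ ∃ a x b, P = a ++ x :: b ∧ Q = a ++ (x + 1) :: b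

/-- The order of 𝔑: reflexive-transitive closure of the cover relation. -/
def NLe : List ℕ+ → List ℕ+ → Prop := Relation.ReflTransGen NCoversP

/-- One elementary operation on words over the alphabet {x₁, x₂, …}: multiply by a
word on the left, multiply by a word on the right, or replace an occurrence of a
letter `xᵢ` by `xⱼ` with `j > i`.  A word `x_{i₁}⋯x_{i_r}` is encoded as the list
`[i₁,…,i_r]` of (positive) indices of its letters. -/
def WordStep (m₁ m₂ : List ℕ+) : Prop :=
  (∃ w, m₂ = w ++ m₁) ∨ (∃ w, m₂ = m₁ ++ w) ∨
    ∃ (a : List ℕ+) (i j : ℕ+) (b : List ℕ+), i < j ∧ m₁ = a ++ i :: b ∧ m₂ = a ++ j :: b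

/-- The order on words: `m₁ ≤ m₂` iff `m₂` is obtained from `m₁` by a finite
sequence of the elementary operations. -/
def WordLe : List ℕ+ → List ℕ+ → Prop := Relation.ReflTransGen WordStep

lemma nle_incr (a b : List ℕ+) : ∀ (k : ℕ) (i j : ℕ+), (j : ℕ) = (i : ℕ) + k →
    NLe (a ++ i :: b) (a ++ j :: b) := by
  intro k
  induction k with
  | zero =>
    intro i j h
    have : j = i := PNat.coe_injective (by omega)
    subst this; exact Relation.ReflTransGen.refl
  | succ k ih =>
    intro i j h
    have hk : 0 < (i : ℕ) + k := by have := i.pos; omega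
    set j' : ℕ+ := ⟨(i : ℕ) + k, hk⟩ with hj'
    have h1 : NLe (a ++ i :: b) (a ++ j' :: b) := ih i j' rfl
    refine h1.tail ?_
    refine Or.inr (Or.inr ⟨a, j', b, rfl, ?_⟩)
    have : j = j' + 1 := PNat.coe_injective (by show (j:ℕ) = (i:ℕ) + k + 1; omega)
    rw [this]

lemma nle_incr_le (a b : List ℕ+) (i j : ℕ+) (h : i ≤ j) :
    NLe (a ++ i :: b) (a ++ j :: b) := by
  refine nle_incr a b ((j : ℕ) - (i : ℕ)) i j ?_
  have : (i : ℕ) ≤ (j : ℕ) := h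
  omega

lemma nle_cons (P : List ℕ+) (i : ℕ+) : NLe P (i :: P) := by
  have h1 : NLe P ((1 : ℕ+) :: P) := Relation.ReflTransGen.single (Or.inl rfl)
  exact h1.trans (nle_incr_le [] P 1 i i.one_le)

lemma nle_prepend (P w : List ℕ+) : NLe P (w ++ P) := by
  induction w with
  | nil => exact Relation.ReflTransGen.refl
  | cons c w ih => exact ih.trans (nle_cons (w ++ P) c)

lemma nle_snoc (P : List ℕ+) (i : ℕ+) : NLe P (P ++ [i]) := by
  have h1 : NLe P (P ++ [1]) := Relation.ReflTransGen.single (Or.inr (Or.inl rfl))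
  exact h1.trans (nle_incr_le P [] 1 i i.one_le)

lemma nle_append (P w : List ℕ+) : NLe P (P ++ w) := by
  induction w generalizing P with
  | nil => simpa [NLe] using (Relation.ReflTransGen.refl : NLe P P)
  | cons c w ih =>
    have := (nle_snoc P c).trans (ih (P ++ [c]))
    simpa [NLe] using this

/-- The map `(p₁,…,p_k) ↦ x_{p₁}x_{p₂}⋯x_{p_k}` is an order
isomorphism from the poset 𝔑 of compositions onto the poset of words described
above.  Under the chosen encodings this map is the identity on underlying sets
(a bijection), so the statement is that it and its inverse are order preserving,
i.e. the two orders coincide. -/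
theorem statement18 : ∀ P Q : List ℕ+, NLe P Q ↔ WordLe P Q := by
  intro P Q
  constructor
  · intro h
    refine Relation.ReflTransGen.mono ?_ _ _ h
    intro x y hxy
    rcases hxy with h | h | ⟨a, i, b, h1, h2⟩
    · exact Or.inl ⟨[1], h⟩
    · exact Or.inr (Or.inl ⟨[1], h⟩)
    · exact Or.inr (Or.inr ⟨a, i, i + 1, b, PNat.lt_add_right i 1, h1, h2⟩)
  · intro h
    induction h with
    | refl => exact Relation.ReflTransGen.refl
    | tail _ hstep ih =>
      refine ih.trans ?_
      rcases hstep with ⟨w, rfl⟩ | ⟨w, rfl⟩ | ⟨a, i, j, b, hij, rfl, rfl⟩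
      · exact nle_prepend _ w
      · exact nle_append _ w
      · exact nle_incr_le a b i j hij.le
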